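/- arXiv:1311.0181 — 4 statements merged into one kernel-verified Lean document; each statement's English description precedes it below -/
import Mathlib

section
/- Under the assumptions that the cgf κ of the log-likelihood ratio L = log(dP/dQ) under Q is finite and thrice differentiable near s = 1, with D = D(P‖Q) > 0 and V = V(P‖Q) > 0 finite and T = T(P‖Q) finite, the Legendre transform Λ(a) = sup_s [as − κ(s)] satisfies Λ(D) = D, Λ'(D) = 1, Λ''(D) = 1/V, and Λ'''(D) = −T/V³; consequently Λ(a) = a + (a−D)²/(2V) + O((a−D)³) as a → D. -/
open MeasureTheory

open Filter Set Metric

lemma exp_bound_aux (n : ℕ) (s x : ℝ) :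
    |x ^ n * Real.exp (s * x)| ≤ Real.exp ((s + n) * x) + Real.exp ((s - n) * x) := by
  have h1 : |x| ≤ Real.exp |x| := by
    have := Real.add_one_le_exp |x|
    linarith [abs_nonneg x]
  have h2 : |x| ^ n ≤ Real.exp ((n : ℝ) * |x|) := by
    calc |x| ^ n ≤ Real.exp |x| ^ n := pow_le_pow_left₀ (abs_nonneg x) h1 n
    _ = Real.exp ((n : ℝ) * |x|) := by rw [← Real.exp_nat_mul]
  have h3 : Real.exp ((n : ℝ) * |x|) ≤ Real.exp ((n : ℝ) * x) + Real.exp (-((n : ℝ) * x)) := by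
    rcases abs_cases x with ⟨h, _⟩ | ⟨h, _⟩
    · rw [h]
      exact le_add_of_nonneg_right (Real.exp_pos _).le
    · rw [h, mul_neg]
      exact le_add_of_nonneg_left (Real.exp_pos _).le
  calc |x ^ n * Real.exp (s * x)| = |x| ^ n * Real.exp (s * x) := by
        rw [abs_mul, abs_pow, abs_of_pos (Real.exp_pos _)]
  _ ≤ (Real.exp ((n : ℝ) * x) + Real.exp (-((n : ℝ) * x))) * Real.exp (s * x) :=
      mul_le_mul_of_nonneg_right (h2.trans h3) (Real.exp_pos _).le
  _ = Real.exp ((s + n) * x) + Real.exp ((s - n) * x) := by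
      rw [add_mul, ← Real.exp_add, ← Real.exp_add]
      ring_nf

lemma exp_mono_aux {a b t : ℝ} (x : ℝ) (h1 : a ≤ t) (h2 : t ≤ b) :
    Real.exp (t * x) ≤ Real.exp (a * x) + Real.exp (b * x) := by
  rcases le_or_gt 0 x with hx | hx
  · exact le_add_of_nonneg_left (Real.exp_pos _).le |>.trans'
      (Real.exp_le_exp.2 (mul_le_mul_of_nonneg_right h2 hx)) |>.trans (le_refl _)
  · exact le_add_of_nonneg_right (Real.exp_pos _).le |>.trans'
      (Real.exp_le_exp.2 (mul_le_mul_of_nonpos_right h1 hx.le)) |>.trans (le_refl _)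

section Aux
variable {Ω : Type*} [MeasurableSpace Ω] (Q : Measure Ω) [IsProbabilityMeasure Q]
  (L : Ω → ℝ)

lemma integrable_pow_exp (hLmeas : Measurable L)
    (hint : ∀ s : ℝ, Integrable (fun ω => Real.exp (s * L ω)) Q) (n : ℕ) (s : ℝ) :
    Integrable (fun ω => L ω ^ n * Real.exp (s * L ω)) Q := by
  refine ((hint (s + n)).add (hint (s - n))).mono' ?_ ?_
  · exact ((hLmeas.pow_const n).mul
      (Real.measurable_exp.comp (hLmeas.const_mul s))).aestronglyMeasurable
  · filter_upwards with ω
    have := exp_bound_aux n s (L ω)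
    rw [abs_mul, abs_pow, abs_of_pos (Real.exp_pos _)] at this
    simpa using this

lemma hasDerivAt_F (hLmeas : Measurable L)
    (hint : ∀ s : ℝ, Integrable (fun ω => Real.exp (s * L ω)) Q) (n : ℕ) (s₀ : ℝ) :
    HasDerivAt (fun s => ∫ ω, L ω ^ n * Real.exp (s * L ω) ∂Q)
      (∫ ω, L ω ^ (n + 1) * Real.exp (s₀ * L ω) ∂Q) s₀ := by
  have key := hasDerivAt_integral_of_dominated_loc_of_deriv_le (μ := Q)
    (F := fun s ω => L ω ^ n * Real.exp (s * L ω))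
    (F' := fun s ω => L ω ^ (n + 1) * Real.exp (s * L ω))
    (x₀ := s₀)
    (bound := fun ω => (Real.exp ((s₀ + n) * L ω) + Real.exp ((s₀ + n + 2) * L ω))
      + (Real.exp ((s₀ - n - 2) * L ω) + Real.exp ((s₀ - n) * L ω)))
    (Metric.ball_mem_nhds s₀ one_pos)
    (Eventually.of_forall fun s => ((hLmeas.pow_const n).mul
      (Real.measurable_exp.comp (hLmeas.const_mul s))).aestronglyMeasurable)
    (integrable_pow_exp Q L hLmeas hint n s₀)
    (((hLmeas.pow_const (n + 1)).mul
      (Real.measurable_exp.comp (hLmeas.const_mul s₀))).aestronglyMeasurable)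
    ?_ ?_ ?_
  · exact key.2
  · filter_upwards with ω s hs
    rw [Real.norm_eq_abs]
    have h1 := exp_bound_aux (n + 1) s (L ω)
    refine h1.trans (add_le_add ?_ ?_)
    · have hs' : |s - s₀| < 1 := by simpa [Real.dist_eq] using hs
      have := abs_lt.1 hs'
      push_cast
      exact exp_mono_aux (L ω) (by linarith) (by linarith)
    · have hs' : |s - s₀| < 1 := by simpa [Real.dist_eq] using hs
      have := abs_lt.1 hs'
      push_cast
      exact exp_mono_aux (L ω) (by linarith) (by linarith)
  · exact (((hint _).add (hint _)).add ((hint _).add (hint _)))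
  · filter_upwards with ω s _
    have h : HasDerivAt (fun u : ℝ => Real.exp (u * L ω)) (Real.exp (s * L ω) * L ω) s := by
      simpa using ((hasDerivAt_id s).mul_const (L ω)).exp
    have h2 := h.const_mul (L ω ^ n)
    refine h2.congr_deriv ?_
    ring

end Aux

section Mid
variable {Ω : Type*} [MeasurableSpace Ω] (Q : Measure Ω) [IsProbabilityMeasure Q] (L : Ω → ℝ)

/-- moment generating functions `s ↦ ∫ L^n e^{sL} dQ` -/
noncomputable def Faux (n : ℕ) : ℝ → ℝ := fun s => ∫ ω, L ω ^ n * Real.exp (s * L ω) ∂Q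

noncomputable def k1aux : ℝ → ℝ := fun s => Faux Q L 1 s / Faux Q L 0 s

noncomputable def k2aux : ℝ → ℝ :=
  fun s => (Faux Q L 2 s * Faux Q L 0 s - Faux Q L 1 s * Faux Q L 1 s) / (Faux Q L 0 s) ^ 2

noncomputable def k3aux : ℝ → ℝ :=
  fun s => (Faux Q L 3 s * (Faux Q L 0 s) ^ 2
    - 3 * Faux Q L 1 s * Faux Q L 2 s * Faux Q L 0 s + 2 * (Faux Q L 1 s) ^ 3) / (Faux Q L 0 s) ^ 3

noncomputable def kappaAux : ℝ → ℝ := fun s => Real.log (Faux Q L 0 s)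

variable (hLmeas : Measurable L)
  (hint : ∀ s : ℝ, Integrable (fun ω => Real.exp (s * L ω)) Q)

include hint

lemma Faux0_pos' (s : ℝ) : 0 < Faux Q L 0 s := by
  have : Faux Q L 0 s = ∫ ω, Real.exp (s * L ω) ∂Q := by
    unfold Faux; simp
  rw [this]
  exact integral_exp_pos (hint s)

include hLmeas

lemma hasDerivAt_Faux (n : ℕ) (s : ℝ) :
    HasDerivAt (Faux Q L n) (Faux Q L (n + 1) s) s :=
  hasDerivAt_F Q L hLmeas hint n s

lemma hasDerivAt_k1aux (s : ℝ) : HasDerivAt (k1aux Q L) (k2aux Q L s) s :=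
  (hasDerivAt_Faux Q L hLmeas hint 1 s).div (hasDerivAt_Faux Q L hLmeas hint 0 s)
    (ne_of_gt (Faux0_pos' Q L hint s))

lemma hasDerivAt_k2aux (s : ℝ) : HasDerivAt (k2aux Q L) (k3aux Q L s) s := by
  have h0 := hasDerivAt_Faux Q L hLmeas hint 0 s
  have h1 := hasDerivAt_Faux Q L hLmeas hint 1 s
  have h2 := hasDerivAt_Faux Q L hLmeas hint 2 s
  have hpos := Faux0_pos' Q L hint s
  have hnum : HasDerivAt (fun u => Faux Q L 2 u * Faux Q L 0 u - Faux Q L 1 u * Faux Q L 1 u)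
      (Faux Q L 3 s * Faux Q L 0 s + Faux Q L 2 s * Faux Q L 1 s
        - (Faux Q L 2 s * Faux Q L 1 s + Faux Q L 1 s * Faux Q L 2 s)) s :=
    (h2.mul h0).sub (h1.mul h1)
  have hden : HasDerivAt (fun u => (Faux Q L 0 u) ^ 2) (2 * Faux Q L 0 s ^ 1 * Faux Q L 1 s) s := by
    exact (h0.pow 2).congr_deriv (by norm_num)
  have := hnum.div hden (by positivity)
  refine this.congr_deriv ?_
  unfold k3aux
  field_simp
  ring

lemma k2aux_nonneg (s : ℝ) : 0 ≤ k2aux Q L s := by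
  have hq : ∀ t : ℝ, 0 ≤ Faux Q L 0 s * (t * t) + (2 * Faux Q L 1 s) * t + Faux Q L 2 s := by
    intro t
    have hnn : 0 ≤ ∫ ω, (t + L ω) ^ 2 * Real.exp (s * L ω) ∂Q :=
      integral_nonneg fun ω => by positivity
    have heq : ∫ ω, (t + L ω) ^ 2 * Real.exp (s * L ω) ∂Q
        = Faux Q L 0 s * (t * t) + (2 * Faux Q L 1 s) * t + Faux Q L 2 s := by
      have h0 := integrable_pow_exp Q L hLmeas hint 0 s
      have h1 := integrable_pow_exp Q L hLmeas hint 1 s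
      have h2 := integrable_pow_exp Q L hLmeas hint 2 s
      have hfun : (fun ω => (t + L ω) ^ 2 * Real.exp (s * L ω))
          = fun ω => ((t * t) * (L ω ^ 0 * Real.exp (s * L ω))
              + (2 * t) * (L ω ^ 1 * Real.exp (s * L ω)))
              + L ω ^ 2 * Real.exp (s * L ω) := by
        funext ω; ring
      have hi : Integrable (fun ω => (t * t) * (L ω ^ 0 * Real.exp (s * L ω))
          + (2 * t) * (L ω ^ 1 * Real.exp (s * L ω))) Q := (h0.const_mul _).add (h1.const_mul _)
      rw [hfun, integral_add hi h2,
        integral_add (h0.const_mul _) (h1.const_mul _), integral_const_mul, integral_const_mul]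
      unfold Faux
      ring
    linarith [heq ▸ hnn]
  have hdisc := discrim_le_zero hq
  unfold discrim at hdisc
  have hpos := Faux0_pos' Q L hint s
  unfold k2aux
  apply div_nonneg _ (by positivity)
  nlinarith [hdisc]

lemma monotone_k1aux : Monotone (k1aux Q L) := by
  apply monotone_of_deriv_nonneg
  · exact fun s => (hasDerivAt_k1aux Q L hLmeas hint s).differentiableAt
  · intro s
    rw [(hasDerivAt_k1aux Q L hLmeas hint s).deriv]
    exact k2aux_nonneg Q L hLmeas hint s

lemma hasDerivAt_kappaAux (s : ℝ) : HasDerivAt (kappaAux Q L) (k1aux Q L s) s :=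
  (hasDerivAt_Faux Q L hLmeas hint 0 s).log (ne_of_gt (Faux0_pos' Q L hint s))

lemma tangent_kappaAux (σ s : ℝ) :
    kappaAux Q L σ + k1aux Q L σ * (s - σ) ≤ kappaAux Q L s := by
  rcases lt_trichotomy s σ with h | h | h
  · obtain ⟨c, hc, hceq⟩ := exists_hasDerivAt_eq_slope (kappaAux Q L) (k1aux Q L) h
      (fun x _ => (hasDerivAt_kappaAux Q L hLmeas hint x).continuousAt.continuousWithinAt)
      (fun x _ => hasDerivAt_kappaAux Q L hLmeas hint x)
    have hmono := monotone_k1aux Q L hLmeas hint hc.2.le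
    have hne : σ - s ≠ 0 := by linarith
    have : kappaAux Q L σ - kappaAux Q L s = k1aux Q L c * (σ - s) := by
      field_simp at hceq
      linarith [hceq]
    nlinarith [this, hmono]
  · simp [h]
  · obtain ⟨c, hc, hceq⟩ := exists_hasDerivAt_eq_slope (kappaAux Q L) (k1aux Q L) h
      (fun x _ => (hasDerivAt_kappaAux Q L hLmeas hint x).continuousAt.continuousWithinAt)
      (fun x _ => hasDerivAt_kappaAux Q L hLmeas hint x)
    have hmono := monotone_k1aux Q L hLmeas hint hc.1.le
    have hne : s - σ ≠ 0 := by linarith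
    have : kappaAux Q L s - kappaAux Q L σ = k1aux Q L c * (s - σ) := by
      field_simp at hceq
      linarith [hceq]
    nlinarith [this, hmono]

lemma continuous_k2aux : Continuous (k2aux Q L) :=
  continuous_iff_continuousAt.2 fun s =>
    (hasDerivAt_k2aux Q L hLmeas hint s).differentiableAt.continuousAt

lemma continuous_k3aux : Continuous (k3aux Q L) := by
  have hF : ∀ n, Continuous (Faux Q L n) := fun n =>
    continuous_iff_continuousAt.2 fun s =>
      (hasDerivAt_Faux Q L hLmeas hint n s).differentiableAt.continuousAt
  unfold k3aux
  exact (((( (hF 3).mul ((hF 0).pow 2)).sub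
    ((((continuous_const.mul (hF 1)).mul (hF 2))).mul (hF 0))).add
    (continuous_const.mul ((hF 1).pow 3))).div ((hF 0).pow 3)
    fun s => pow_ne_zero _ (ne_of_gt (Faux0_pos' Q L hint s)))

lemma hasStrictDerivAt_k1aux (s : ℝ) : HasStrictDerivAt (k1aux Q L) (k2aux Q L s) s := by
  have hC1 : ContDiff ℝ 1 (k1aux Q L) := by
    rw [contDiff_one_iff_deriv]
    refine ⟨fun x => (hasDerivAt_k1aux Q L hLmeas hint x).differentiableAt, ?_⟩
    have : deriv (k1aux Q L) = k2aux Q L := by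
      funext x; exact (hasDerivAt_k1aux Q L hLmeas hint x).deriv
    rw [this]
    exact continuous_k2aux Q L hLmeas hint
  have := (hC1.contDiffAt (x := s)).hasStrictDerivAt one_ne_zero
  rwa [(hasDerivAt_k1aux Q L hLmeas hint s).deriv] at this

end Mid

/-- Taylor expansion of the large-deviations function `Λ(a) = sup_s [as − κ(s)]`
of a log-likelihood ratio: `Λ(D) = D`, `Λ'(D) = 1`, `Λ''(D) = 1/V`, `Λ'''(D) = −T/V³`,
hence `Λ(a) = a + (a−D)²/(2V) + O((a−D)³)` as `a → D`. -/
theorem legendre_transform_loglikelihood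
    {Ω : Type*} [MeasurableSpace Ω]
    (P Q : Measure Ω) [IsProbabilityMeasure P] [IsProbabilityMeasure Q]
    (hPQ : P ≪ Q)
    (L : Ω → ℝ) (hLmeas : Measurable L)
    (hL : ∀ᵐ ω ∂Q, L ω = Real.log ((P.rnDeriv Q ω).toReal))
    (hrnpos : ∀ᵐ ω ∂Q, 0 < (P.rnDeriv Q ω).toReal)
    (hint : ∀ s : ℝ, Integrable (fun ω => Real.exp (s * L ω)) Q)
    (D V T : ℝ)
    (hD : D = ∫ ω, L ω ∂P)
    (hV : V = ∫ ω, (L ω - D) ^ 2 ∂P)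
    (hT : T = ∫ ω, (L ω - D) ^ 3 ∂P)
    (hDpos : 0 < D) (hVpos : 0 < V)
    (κ : ℝ → ℝ) (hκ : ∀ s : ℝ, κ s = Real.log (∫ ω, Real.exp (s * L ω) ∂Q))
    (hsmooth : ∃ ε > 0, ContDiffOn ℝ 3 κ (Set.Ioo (1 - ε) (1 + ε)))
    (Λ : ℝ → ℝ) (hΛ : ∀ a : ℝ, Λ a = sSup {v | ∃ s : ℝ, v = a * s - κ s}) :
    Λ D = D ∧
    deriv Λ D = 1 ∧
    deriv (deriv Λ) D = 1 / V ∧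
    deriv (deriv (deriv Λ)) D = -T / V ^ 3 ∧
    ∃ K δ : ℝ, 0 < δ ∧ ∀ a : ℝ, |a - D| < δ →
      |Λ a - (a + (a - D) ^ 2 / (2 * V))| ≤ K * |a - D| ^ 3 := by
  clear hsmooth
  have hκfun : κ = kappaAux Q L := by
    funext s
    rw [hκ]
    unfold kappaAux Faux
    simp
  subst hκfun
  -- moments of L under P
  have hae : ∀ᵐ ω ∂Q, Real.exp (L ω) = (P.rnDeriv Q ω).toReal := by
    filter_upwards [hL, hrnpos] with ω h1 h2
    rw [h1, Real.exp_log h2]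
  have hFP : ∀ n : ℕ, Faux Q L n 1 = ∫ ω, L ω ^ n ∂P := by
    intro n
    have h : Faux Q L n 1 = ∫ ω, (P.rnDeriv Q ω).toReal • (L ω ^ n) ∂Q := by
      unfold Faux
      refine integral_congr_ae ?_
      filter_upwards [hae] with ω h
      rw [smul_eq_mul, ← h, one_mul]
      ring
    rw [h, integral_rnDeriv_smul hPQ]
  have hintP : ∀ n : ℕ, Integrable (fun ω => L ω ^ n) P := by
    intro n
    rw [← integrable_rnDeriv_smul_iff hPQ]
    refine (integrable_pow_exp Q L hLmeas hint n 1).congr ?_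
    filter_upwards [hae] with ω h
    rw [smul_eq_mul, ← h, one_mul]
    ring
  have hF01 : Faux Q L 0 1 = 1 := by rw [hFP 0]; simp
  have hF11 : Faux Q L 1 1 = D := by rw [hFP 1]; simp [hD]
  have hVm : V = Faux Q L 2 1 - D ^ 2 := by
    rw [hFP 2]
    have hfun : (fun ω => (L ω - D) ^ 2)
        = fun ω => (L ω ^ 2 - (2 * D) * L ω ^ 1) + D ^ 2 * L ω ^ 0 := by
      funext ω; ring
    have hi1 : Integrable (fun ω => L ω ^ 2 - (2 * D) * L ω ^ 1) P :=
      (hintP 2).sub ((hintP 1).const_mul _)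
    rw [hV, hfun, integral_add hi1 ((hintP 0).const_mul _),
      integral_sub (hintP 2) ((hintP 1).const_mul _), integral_const_mul, integral_const_mul,
      ← hFP 1, ← hFP 0, hF11, hF01]
    ring
  have hTm : T = Faux Q L 3 1 - 3 * D * Faux Q L 2 1 + 2 * D ^ 3 := by
    rw [hFP 3]
    have hfun : (fun ω => (L ω - D) ^ 3)
        = fun ω => ((L ω ^ 3 - (3 * D) * L ω ^ 2) + (3 * D ^ 2) * L ω ^ 1)
            - D ^ 3 * L ω ^ 0 := by
      funext ω; ring
    have hi1 : Integrable (fun ω => L ω ^ 3 - (3 * D) * L ω ^ 2) P :=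
      (hintP 3).sub ((hintP 2).const_mul _)
    have hi2 : Integrable (fun ω => (L ω ^ 3 - (3 * D) * L ω ^ 2) + (3 * D ^ 2) * L ω ^ 1) P :=
      hi1.add ((hintP 1).const_mul _)
    rw [hT, hfun, integral_sub hi2 ((hintP 0).const_mul _), integral_add hi1 ((hintP 1).const_mul _),
      integral_sub (hintP 3) ((hintP 2).const_mul _), integral_const_mul, integral_const_mul,
      integral_const_mul, ← hFP 1, ← hFP 0, ← hFP 2, hF11, hF01]
    have hVm2 : Faux Q L 2 1 = V + D ^ 2 := by linarith
    ring
  have hk11 : k1aux Q L 1 = D := by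
    unfold k1aux; rw [hF01, hF11, div_one]
  have hk21 : k2aux Q L 1 = V := by
    unfold k2aux; rw [hF01, hF11]; rw [hVm]; ring
  have hk31 : k3aux Q L 1 = T := by
    unfold k3aux; rw [hF01, hF11]; rw [hTm]; ring
  have hVne : V ≠ 0 := ne_of_gt hVpos
  -- inverse function theorem setup
  have hstrict : HasStrictDerivAt (k1aux Q L) V 1 :=
    hk21 ▸ hasStrictDerivAt_k1aux Q L hLmeas hint 1
  have hfe := hstrict.hasStrictFDerivAt_equiv hVne
  set e := hfe.toOpenPartialHomeomorph (k1aux Q L) with he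
  set φ : ℝ → ℝ := ⇑e.symm with hφdef
  have hecoe : ∀ x, e x = k1aux Q L x := fun x => rfl
  have hsrc : (1 : ℝ) ∈ e.source := hfe.mem_toOpenPartialHomeomorph_source
  have htgt : D ∈ e.target := by
    have := hfe.image_mem_toOpenPartialHomeomorph_target
    rwa [show k1aux Q L 1 = D from hk11] at this
  have hφD : φ D = 1 := by
    have := e.left_inv hsrc
    rw [hecoe 1, hk11] at this
    exact this
  have hright : ∀ a ∈ e.target, k1aux Q L (φ a) = a := by
    intro a ha
    have := e.right_inv ha
    rwa [hecoe] at this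
  have hφcont : ContinuousOn φ e.target := e.continuousOn_symm
  -- a neighborhood of D with good properties
  have hUopen : IsOpen (e.target ∩ φ ⁻¹' (k2aux Q L ⁻¹' Set.Ioi 0)) :=
    hφcont.isOpen_inter_preimage e.open_target
      (IsOpen.preimage (continuous_k2aux Q L hLmeas hint) isOpen_Ioi)
  have hDU : D ∈ e.target ∩ φ ⁻¹' (k2aux Q L ⁻¹' Set.Ioi 0) := by
    refine ⟨htgt, ?_⟩
    simp only [Set.mem_preimage, hφD, hk21, Set.mem_Ioi]
    exact hVpos
  obtain ⟨r, hr, hball⟩ := Metric.isOpen_iff.1 hUopen D hDU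
  have hmem : ∀ a ∈ ball D r, a ∈ e.target ∧ 0 < k2aux Q L (φ a) := by
    intro a ha
    have := hball ha
    exact ⟨this.1, this.2⟩
  have hrt : ∀ a ∈ ball D r, k1aux Q L (φ a) = a := fun a ha => hright a (hmem a ha).1
  -- derivative of φ
  have hφ' : ∀ a ∈ ball D r, HasStrictDerivAt φ ((k2aux Q L (φ a))⁻¹) a := by
    intro a ha
    have hsrcφ : φ a ∈ e.source := e.map_target (hmem a ha).1
    have h1 : HasStrictDerivAt (k1aux Q L) (k2aux Q L (φ a)) (φ a) :=
      hasStrictDerivAt_k1aux Q L hLmeas hint (φ a)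
    have h2 : ∀ᶠ x in nhds (φ a), φ (k1aux Q L x) = x :=
      Filter.eventually_of_mem (e.open_source.mem_nhds hsrcφ) fun x hx => e.left_inv hx
    have := h1.to_local_left_inverse (ne_of_gt (hmem a ha).2) h2
    rwa [hrt a ha] at this
  -- Λ equals the envelope formula on the ball
  have hΛeq : ∀ a ∈ ball D r, Λ a = a * φ a - kappaAux Q L (φ a) := by
    intro a ha
    rw [hΛ a]
    refine IsGreatest.csSup_eq ⟨⟨φ a, rfl⟩, ?_⟩
    rintro v ⟨s, rfl⟩
    have htng := tangent_kappaAux Q L hLmeas hint (φ a) s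
    rw [hrt a ha] at htng
    linarith
  -- first derivative
  have hG' : ∀ a ∈ ball D r,
      HasDerivAt (fun x => x * φ x - kappaAux Q L (φ x)) (φ a) a := by
    intro a ha
    have hφa := (hφ' a ha).hasDerivAt
    have h1 : HasDerivAt (fun x : ℝ => x * φ x) (1 * φ a + a * (k2aux Q L (φ a))⁻¹) a :=
      (hasDerivAt_id a).mul hφa
    have h2 : HasDerivAt (fun x => kappaAux Q L (φ x))
        (k1aux Q L (φ a) * (k2aux Q L (φ a))⁻¹) a :=
      (hasDerivAt_kappaAux Q L hLmeas hint (φ a)).comp a hφa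
    have h3 := h1.sub h2
    refine h3.congr_deriv ?_
    rw [hrt a ha]
    ring
  have hΛloc : ∀ a ∈ ball D r, Λ =ᶠ[nhds a] fun x => x * φ x - kappaAux Q L (φ x) :=
    fun a ha => Filter.eventually_of_mem (isOpen_ball.mem_nhds ha) fun x hx => hΛeq x hx
  have hΛ' : ∀ a ∈ ball D r, HasDerivAt Λ (φ a) a :=
    fun a ha => (hG' a ha).congr_of_eventuallyEq (hΛloc a ha)
  have hdΛ : ∀ a ∈ ball D r, deriv Λ a = φ a := fun a ha => (hΛ' a ha).deriv
  -- second derivative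
  have hΛ'' : ∀ a ∈ ball D r, HasDerivAt (deriv Λ) ((k2aux Q L (φ a))⁻¹) a := by
    intro a ha
    refine ((hφ' a ha).hasDerivAt).congr_of_eventuallyEq ?_
    exact Filter.eventually_of_mem (isOpen_ball.mem_nhds ha) fun x hx => hdΛ x hx
  have hd2 : ∀ a ∈ ball D r, deriv (deriv Λ) a = (k2aux Q L (φ a))⁻¹ :=
    fun a ha => (hΛ'' a ha).deriv
  -- third derivative
  set W : ℝ → ℝ := fun a =>
    -(k3aux Q L (φ a) * (k2aux Q L (φ a))⁻¹) / (k2aux Q L (φ a)) ^ 2 with hWdef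
  have hH' : ∀ a ∈ ball D r,
      HasDerivAt (fun x => (k2aux Q L (φ x))⁻¹) (W a) a := by
    intro a ha
    exact ((hasDerivAt_k2aux Q L hLmeas hint (φ a)).comp a
      (hφ' a ha).hasDerivAt).inv (ne_of_gt (hmem a ha).2)
  have hΛ''' : ∀ a ∈ ball D r, HasDerivAt (deriv (deriv Λ)) (W a) a := by
    intro a ha
    refine (hH' a ha).congr_of_eventuallyEq ?_
    exact Filter.eventually_of_mem (isOpen_ball.mem_nhds ha) fun x hx => hd2 x hx
  have hDball : D ∈ ball D r := mem_ball_self hr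
  have hκ1 : kappaAux Q L 1 = 0 := by
    unfold kappaAux
    rw [hF01, Real.log_one]
  -- first four conclusions
  have c1 : Λ D = D := by
    rw [hΛeq D hDball, hφD, hκ1]
    ring
  have c2 : deriv Λ D = 1 := by rw [hdΛ D hDball, hφD]
  have c3 : deriv (deriv Λ) D = 1 / V := by
    rw [hd2 D hDball, hφD, hk21, one_div]
  have hWD : W D = -T / V ^ 3 := by
    have h1 : W D = -(T * V⁻¹) / V ^ 2 := by
      rw [hWdef]
      simp only [hφD, hk21, hk31]
    rw [h1, div_eq_div_iff (pow_ne_zero 2 hVne) (pow_ne_zero 3 hVne)]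
    field_simp
  have c4 : deriv (deriv (deriv Λ)) D = -T / V ^ 3 := by
    rw [(hΛ''' D hDball).deriv, hWD]
  refine ⟨c1, c2, c3, c4, ?_⟩
  -- Taylor remainder bound
  set g : ℝ → ℝ := fun a => Λ a - (a + (a - D) ^ 2 / (2 * V)) with hgdef
  set g1 : ℝ → ℝ := fun a => φ a - (1 + (a - D) / V) with hg1def
  set g2 : ℝ → ℝ := fun a => (k2aux Q L (φ a))⁻¹ - 1 / V with hg2def
  have hg' : ∀ a ∈ ball D r, HasDerivAt g (g1 a) a := by
    intro a ha
    have hq : HasDerivAt (fun x : ℝ => (x - D) ^ 2) (2 * (a - D)) a := by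
      exact (((hasDerivAt_id a).sub_const D).pow 2).congr_deriv (by simp)
    have hp : HasDerivAt (fun x : ℝ => x + (x - D) ^ 2 / (2 * V))
        (1 + 2 * (a - D) / (2 * V)) a := (hasDerivAt_id a).add (hq.div_const (2 * V))
    have h3 := (hΛ' a ha).sub hp
    rw [hgdef, hg1def]
    refine h3.congr_deriv ?_
    field_simp
  have hg1' : ∀ a ∈ ball D r, HasDerivAt g1 (g2 a) a := by
    intro a ha
    have hp : HasDerivAt (fun x : ℝ => 1 + (x - D) / V) (1 / V) a :=
      (((hasDerivAt_id a).sub_const D).div_const V).const_add 1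
    rw [hg1def, hg2def]
    exact ((hφ' a ha).hasDerivAt).sub hp
  have hg2' : ∀ a ∈ ball D r, HasDerivAt g2 (W a) a := by
    intro a ha
    rw [hg2def]
    exact (hH' a ha).sub_const (1 / V)
  have hgD : g D = 0 := by rw [hgdef]; simp [c1]
  have hg1D : g1 D = 0 := by rw [hg1def]; simp [hφD]
  have hg2D : g2 D = 0 := by rw [hg2def]; simp [hφD, hk21, one_div]
  -- bound on the third derivative near D
  have hφca : ContinuousAt φ D := hφcont.continuousAt (e.open_target.mem_nhds htgt)
  have hk2ca : ContinuousAt (fun a => k2aux Q L (φ a)) D :=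
    ((continuous_k2aux Q L hLmeas hint).continuousAt).comp hφca
  have hk3ca : ContinuousAt (fun a => k3aux Q L (φ a)) D :=
    ((continuous_k3aux Q L hLmeas hint).continuousAt).comp hφca
  have hk2D : k2aux Q L (φ D) = V := by rw [hφD, hk21]
  have hWca : ContinuousAt W D := by
    rw [hWdef]
    exact ((hk3ca.mul (hk2ca.inv₀ (by rw [hk2D]; exact hVne))).neg).div
      (hk2ca.pow 2) (by rw [hk2D]; exact pow_ne_zero 2 hVne)
  set M : ℝ := |W D| + 1 with hMdef
  have hMpos : 0 ≤ M := by positivity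
  have hev : ∀ᶠ x in nhds D, |W x| ≤ M ∧ x ∈ ball D r := by
    have h1 : ∀ᶠ x in nhds D, W x ∈ ball (W D) 1 := hWca (Metric.ball_mem_nhds _ one_pos)
    have h2 : ∀ᶠ x in nhds D, x ∈ ball D r := isOpen_ball.mem_nhds hDball
    filter_upwards [h1, h2] with x hx1 hx2
    refine ⟨?_, hx2⟩
    have hd : |W x - W D| < 1 := by
      have := mem_ball.1 hx1
      rwa [Real.dist_eq] at this
    have habs := abs_sub_abs_le_abs_sub (W x) (W D)
    rw [hMdef]
    linarith
  obtain ⟨δ, hδ, hδball⟩ := Metric.eventually_nhds_iff.1 hev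
  have hball' : ball D δ ⊆ ball D r := fun x hx => (hδball (mem_ball.1 hx)).2
  have hWb : ∀ x ∈ ball D δ, |W x| ≤ M := fun x hx => (hδball (mem_ball.1 hx)).1
  have hstep1 : ∀ x ∈ ball D δ, |g2 x| ≤ M * |x - D| := by
    intro x hx
    have h := Convex.norm_image_sub_le_of_norm_hasDerivWithin_le
      (f := g2) (f' := W) (s := ball D δ)
      (fun y hy => (hg2' y (hball' hy)).hasDerivWithinAt)
      (fun y hy => by rw [Real.norm_eq_abs]; exact hWb y hy)
      (convex_ball D δ) (mem_ball_self hδ) hx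
    rwa [hg2D, sub_zero, Real.norm_eq_abs, Real.norm_eq_abs] at h
  have hsegsub : ∀ a ∈ ball D δ, segment ℝ D a ⊆ ball D δ :=
    fun a ha => (convex_ball D δ).segment_subset (mem_ball_self hδ) ha
  have hsegdist : ∀ a : ℝ, ∀ x ∈ segment ℝ D a, |x - D| ≤ |a - D| := by
    intro a x hx
    obtain ⟨u, v, hu, hv, huv, hxe⟩ := hx
    have hu1 : u = 1 - v := by linarith
    have hx' : x - D = v * (a - D) := by
      rw [← hxe, hu1]
      simp only [smul_eq_mul]
      ring
    have hv1 : v ≤ 1 := by linarith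
    rw [hx', abs_mul, abs_of_nonneg hv]
    nlinarith [abs_nonneg (a - D)]
  have hstep2 : ∀ a ∈ ball D δ, |g1 a| ≤ M * |a - D| * |a - D| := by
    intro a ha
    have h := Convex.norm_image_sub_le_of_norm_hasDerivWithin_le
      (f := g1) (f' := g2) (s := segment ℝ D a) (C := M * |a - D|)
      (fun y hy => (hg1' y (hball' (hsegsub a ha hy))).hasDerivWithinAt)
      (fun y hy => by
        rw [Real.norm_eq_abs]
        exact (hstep1 y (hsegsub a ha hy)).trans
          (mul_le_mul_of_nonneg_left (hsegdist a y hy) hMpos))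
      (convex_segment D a) (left_mem_segment ℝ D a) (right_mem_segment ℝ D a)
    rwa [hg1D, sub_zero, Real.norm_eq_abs, Real.norm_eq_abs] at h
  have hstep3 : ∀ a ∈ ball D δ, |g a| ≤ M * |a - D| * |a - D| * |a - D| := by
    intro a ha
    have h := Convex.norm_image_sub_le_of_norm_hasDerivWithin_le
      (f := g) (f' := g1) (s := segment ℝ D a) (C := M * |a - D| * |a - D|)
      (fun y hy => (hg' y (hball' (hsegsub a ha hy))).hasDerivWithinAt)
      (fun y hy => by
        rw [Real.norm_eq_abs]
        refine (hstep2 y (hsegsub a ha hy)).trans ?_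
        have h1 := hsegdist a y hy
        have h2 := abs_nonneg (y - D)
        have h3 := abs_nonneg (a - D)
        calc M * |y - D| * |y - D| = M * (|y - D| * |y - D|) := by ring
        _ ≤ M * (|a - D| * |a - D|) :=
          mul_le_mul_of_nonneg_left (mul_le_mul h1 h1 h2 h3) hMpos
        _ = M * |a - D| * |a - D| := by ring)
      (convex_segment D a) (left_mem_segment ℝ D a) (right_mem_segment ℝ D a)
    rwa [hgD, sub_zero, Real.norm_eq_abs, Real.norm_eq_abs] at h
  refine ⟨M, δ, hδ, fun a ha => ?_⟩
  have ha' : a ∈ ball D δ := by rw [mem_ball, Real.dist_eq]; exact ha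
  have h := hstep3 a ha'
  have hfin : |Λ a - (a + (a - D) ^ 2 / (2 * V))| = |g a| := by rw [hgdef]
  rw [hfin]
  calc |g a| ≤ M * |a - D| * |a - D| * |a - D| := h
  _ = M * |a - D| ^ 3 := by ring
end

section
/- The conditional Kullback–Leibler divergence D(W‖Q|P), as a function of an input distribution P on X and an output distribution Q on Y, admits a saddlepoint at (P₀, Q*) for every capacity-achieving input distribution P₀: for all P and Q, D(W‖Q*|P) ≤ D(W‖Q*|P₀) ≤ D(W‖Q|P₀), with saddle value equal to the channel capacity C. -/
/-- saddlepoint of the conditional KL divergence `D(W‖Q|P)` at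
`(P₀, Q*)` for any capacity-achieving input distribution `P₀`, with saddle value `C`. -/
theorem conditional_kl_saddlepoint
    {X Y : Type*} [Fintype X] [Fintype Y]
    (W : X → Y → ℝ) (hW0 : ∀ x y, 0 ≤ W x y) (hW1 : ∀ x, ∑ y, W x y = 1)
    (C : ℝ) (Qstar : Y → ℝ) (hQ0 : ∀ y, 0 < Qstar y) (hQ1 : ∑ y, Qstar y = 1)
    (hC : ∀ x, ∑ y, W x y * Real.log (W x y / Qstar y) ≤ C)
    (P₀ : X → ℝ) (hP₀0 : ∀ x, 0 ≤ P₀ x) (hP₀1 : ∑ x, P₀ x = 1)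
    (hout : ∀ y, ∑ x, P₀ x * W x y = Qstar y)
    (hcap : ∑ x, P₀ x * ∑ y, W x y * Real.log (W x y / Qstar y) = C) :
    (∀ P : X → ℝ, (∀ x, 0 ≤ P x) → ∑ x, P x = 1 →
        ∑ x, P x * ∑ y, W x y * Real.log (W x y / Qstar y)
          ≤ ∑ x, P₀ x * ∑ y, W x y * Real.log (W x y / Qstar y)) ∧
    (∀ Q : Y → ℝ, (∀ y, 0 < Q y) → ∑ y, Q y = 1 →
        ∑ x, P₀ x * ∑ y, W x y * Real.log (W x y / Qstar y)
          ≤ ∑ x, P₀ x * ∑ y, W x y * Real.log (W x y / Q y)) ∧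
    ∑ x, P₀ x * ∑ y, W x y * Real.log (W x y / Qstar y) = C := by
  refine ⟨?_, ?_, hcap⟩
  · intro P hP0 hP1
    rw [hcap]
    calc ∑ x, P x * ∑ y, W x y * Real.log (W x y / Qstar y)
        ≤ ∑ x, P x * C := by
          apply Finset.sum_le_sum
          intro x _
          exact mul_le_mul_of_nonneg_left (hC x) (hP0 x)
      _ = C := by rw [← Finset.sum_mul, hP1, one_mul]
  · intro Q hQ0' hQ1'
    -- key decomposition: log (W/Q) = log (W/Q*) + log (Q*/Q) when W > 0
    have hsplit : ∀ x, ∑ y, W x y * Real.log (W x y / Q y)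
        = (∑ y, W x y * Real.log (W x y / Qstar y))
          + ∑ y, W x y * Real.log (Qstar y / Q y) := by
      intro x
      rw [← Finset.sum_add_distrib]
      apply Finset.sum_congr rfl
      intro y _
      rcases eq_or_lt_of_le (hW0 x y) with h | h
      · simp [← h]
      · rw [← mul_add, ← Real.log_mul (ne_of_gt (div_pos h (hQ0 y)))
          (ne_of_gt (div_pos (hQ0 y) (hQ0' y)))]
        rw [div_mul_div_comm, mul_comm (Qstar y) (Q y),
          mul_div_mul_right _ _ (hQ0 y).ne']
    have hQsum : ∑ x, P₀ x * ∑ y, W x y * Real.log (Qstar y / Q y)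
        = ∑ y, Qstar y * Real.log (Qstar y / Q y) := by
      have : ∀ x, P₀ x * ∑ y, W x y * Real.log (Qstar y / Q y)
          = ∑ y, P₀ x * W x y * Real.log (Qstar y / Q y) := by
        intro x
        rw [Finset.mul_sum]
        exact Finset.sum_congr rfl fun y _ => by ring
      simp_rw [this]
      rw [Finset.sum_comm]
      apply Finset.sum_congr rfl
      intro y _
      rw [← Finset.sum_mul, hout y]
    have hGibbs : 0 ≤ ∑ y, Qstar y * Real.log (Qstar y / Q y) := by
      have h1 : ∀ y ∈ Finset.univ, Qstar y - Q y ≤ Qstar y * Real.log (Qstar y / Q y) := by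
        intro y _
        have hlog : Real.log (Q y / Qstar y) ≤ Q y / Qstar y - 1 :=
          Real.log_le_sub_one_of_pos (div_pos (hQ0' y) (hQ0 y))
        have hneg : Qstar y * Real.log (Qstar y / Q y)
            = - (Qstar y * Real.log (Q y / Qstar y)) := by
          rw [show Qstar y / Q y = (Q y / Qstar y)⁻¹ by rw [inv_div], Real.log_inv]
          ring
        rw [hneg]
        have := mul_le_mul_of_nonneg_left hlog (hQ0 y).le
        have heq : Qstar y * (Q y / Qstar y - 1) = Q y - Qstar y := by
          rw [mul_sub, mul_div_cancel₀ _ (hQ0 y).ne', mul_one]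
        nlinarith
      calc (0:ℝ) = ∑ y, (Qstar y - Q y) := by
            rw [Finset.sum_sub_distrib, hQ1, hQ1']; ring
        _ ≤ _ := Finset.sum_le_sum h1
    calc ∑ x, P₀ x * ∑ y, W x y * Real.log (W x y / Qstar y)
        ≤ (∑ x, P₀ x * ∑ y, W x y * Real.log (W x y / Qstar y))
          + ∑ y, Qstar y * Real.log (Qstar y / Q y) := le_add_of_nonneg_right hGibbs
      _ = ∑ x, P₀ x * ∑ y, W x y * Real.log (W x y / Q y) := by
          rw [← hQsum]
          simp_rw [hsplit, mul_add, Finset.sum_add_distrib]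
end

section
/- For the Z channel with parameter θ ∈ (0,1), the capacity-achieving input distribution assigns probability a = 1 − 1/((1−θ)(1 + exp(h₂(θ)/(1−θ)))) to input 0, a ≥ 1/2, and the capacity equals C(θ) = h₂((1−a)(1−θ)) − (1−a)h₂(θ). -/
set_option maxHeartbeats 1000000 in
/-- Z channel with parameter θ ∈ (0,1): the capacity-achieving input
distribution puts mass `a = 1 − 1/((1−θ)(1+exp(h₂(θ)/(1−θ))))` on input 0, `a ≥ 1/2`,
and the capacity equals `C(θ) = h₂((1−a)(1−θ)) − (1−a)h₂(θ)`. -/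
theorem z_channel_capacity
    (θ : ℝ) (hθ0 : 0 < θ) (hθ1 : θ < 1)
    (h2 : ℝ → ℝ)
    (hh2 : ∀ p, h2 p = -(p * Real.log p) - (1 - p) * Real.log (1 - p))
    (a : ℝ) (ha : a = 1 - 1 / ((1 - θ) * (1 + Real.exp (h2 θ / (1 - θ)))))
    (W : Fin 2 → Fin 2 → ℝ) (hW : W = ![![1, 0], ![θ, 1 - θ]])
    (Ifun : (Fin 2 → ℝ) → ℝ)
    (hI : ∀ P : Fin 2 → ℝ,
      Ifun P = ∑ x, ∑ y, P x * W x y * Real.log (W x y / ∑ x', P x' * W x' y))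
    (C : ℝ) (hC : C = h2 ((1 - a) * (1 - θ)) - (1 - a) * h2 θ)
    (Pstar : Fin 2 → ℝ) (hPstar : Pstar = ![a, 1 - a]) :
    1 / 2 ≤ a ∧
    Ifun Pstar = C ∧
    (∀ P : Fin 2 → ℝ, (∀ x, 0 ≤ P x) → ∑ x, P x = 1 → Ifun P ≤ C) := by
  have ht1 : (0:ℝ) < 1 - θ := by linarith
  set s : ℝ := h2 θ / (1 - θ) with hs_def
  set E : ℝ := Real.exp s with hE_def
  have hE : (0:ℝ) < E := Real.exp_pos s
  have hE1 : (0:ℝ) < 1 + E := by linarith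
  have hlogE : Real.log E = s := Real.log_exp s
  have hs : (1 - θ) * s = h2 θ := by
    rw [hs_def]; field_simp
  -- u = (1-a)(1-θ) = 1/(1+E)
  have hb : 1 - a = 1 / ((1 - θ) * (1 + E)) := by rw [ha]; ring
  have hu : (1 - a) * (1 - θ) = 1 / (1 + E) := by
    rw [hb]; field_simp
  set u : ℝ := 1 / (1 + E) with hu_def
  have hu0 : 0 < u := by positivity
  have hu1 : u < 1 := by
    rw [hu_def, div_lt_one hE1]; linarith
  have h1u : 1 - u = E / (1 + E) := by
    rw [hu_def]; field_simp; ring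
  set L : ℝ := Real.log (1 + E) with hL_def
  have hlogu : Real.log u = -L := by
    rw [hu_def, one_div, Real.log_inv]
  have hlog1u : Real.log (1 - u) = s - L := by
    rw [h1u, Real.log_div (ne_of_gt hE) (ne_of_gt hE1), hlogE]
  -- θ log θ + (1-θ) log (1-θ) = -(1-θ) s
  have hent : θ * Real.log θ + (1 - θ) * Real.log (1 - θ) = -((1 - θ) * s) := by
    have := hh2 θ; rw [← hs] at this; linarith [this]
  -- C = L - s
  have hC' : C = L - s := by
    rw [hC, hu, hh2, hlogu, hlog1u]
    have hba : (1 - a) * h2 θ = u * s := by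
      rw [← hs, ← hu]; ring
    rw [hba]; ring
  -- C ≥ 0
  have hCpos : 0 ≤ C := by
    rw [hC']
    have : s ≤ L := by
      rw [hL_def, ← hlogE]
      exact Real.log_le_log hE (by linarith)
    linarith
  -- Gibbs: x (log y - log x) ≤ y - x  for x,y>0
  have gibbs : ∀ x y : ℝ, 0 < x → 0 < y → x * (Real.log y - Real.log x) ≤ y - x := by
    intro x y hx hy
    have h1 : Real.log (y / x) ≤ y / x - 1 := Real.log_le_sub_one_of_pos (by positivity)
    rw [Real.log_div (ne_of_gt hy) (ne_of_gt hx)] at h1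
    have := mul_le_mul_of_nonneg_left h1 (le_of_lt hx)
    calc x * (Real.log y - Real.log x) ≤ x * (y / x - 1) := this
      _ = y - x := by field_simp
  -- explicit Ifun
  have hIexp : ∀ P : Fin 2 → ℝ, Ifun P =
      P 0 * Real.log (1/(P 0 + P 1 * θ)) + P 1 * θ * Real.log (θ/(P 0 + P 1 * θ))
        + P 1 * (1-θ) * Real.log ((1-θ)/(P 1 * (1-θ))) := by
    intro P
    rw [hI, hW]
    simp [Fin.sum_univ_two]
    ring_nf
  -- part 1 : 1/2 ≤ a
  have part1 : 1 / 2 ≤ a := by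
    -- h2 θ ≥ (1-θ) log((1+θ)/(1-θ))
    have l1 : Real.log θ ≤ θ - 1 := by
      have := Real.log_le_sub_one_of_pos hθ0; linarith
    have l2 : Real.log (1 + θ) ≤ θ := by
      have := Real.log_le_sub_one_of_pos (show (0:ℝ) < 1 + θ by linarith); linarith
    have key : Real.log ((1 + θ) / (1 - θ)) ≤ s := by
      rw [Real.log_div (by linarith) (ne_of_gt ht1), hs_def, le_div_iff₀ ht1]
      have h2θ : h2 θ = -(θ * Real.log θ) - (1 - θ) * Real.log (1 - θ) := hh2 θ
      nlinarith [mul_le_mul_of_nonneg_left l2 (le_of_lt ht1),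
        mul_le_mul_of_nonneg_left l1 (le_of_lt hθ0)]
    have hEge : (1 + θ) / (1 - θ) ≤ E := by
      rw [hE_def, ← Real.exp_log (show (0:ℝ) < (1 + θ) / (1 - θ) by positivity)]
      exact Real.exp_le_exp.mpr key
    have h2le : 2 ≤ (1 - θ) * (1 + E) := by
      have := (div_le_iff₀ ht1).mp hEge
      nlinarith
    have : 1 - a ≤ 1 / 2 := by
      rw [hb]
      rw [div_le_div_iff₀ (by nlinarith) (by norm_num)]
      linarith
    linarith
  -- abbreviations for D0, D1 pieces
  have hQ0pos : (0:ℝ) < 1 - u := by linarith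
  -- part 2 : Ifun Pstar = C
  have part2 : Ifun Pstar = C := by
    rw [hIexp, hPstar]
    simp only [Matrix.cons_val_zero, Matrix.cons_val_one, Matrix.head_cons]
    have hR0 : a + (1 - a) * θ = 1 - u := by
      have : a + (1 - a) * θ = 1 - (1 - a) * (1 - θ) := by ring
      rw [this, hu]
    rw [hR0]
    have hR1 : (1 - a) * (1 - θ) = u := hu
    rw [hR1]
    rw [Real.log_div one_ne_zero (ne_of_gt hQ0pos),
        Real.log_div (ne_of_gt hθ0) (ne_of_gt hQ0pos),
        Real.log_div (ne_of_gt ht1) (ne_of_gt hu0),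
        hlogu, hlog1u, Real.log_one, hC']
    -- linear identity using hent and hu
    linear_combination (1 - a) * hent - (Real.log (1 - θ) + L) * hu
  refine ⟨part1, part2, ?_⟩
  -- part 3
  intro P hP hsum
  have hsum2 : P 0 + P 1 = 1 := by rw [← hsum]; simp [Fin.sum_univ_two]
  have hp0 : 0 ≤ P 0 := hP 0
  have hq0 : 0 ≤ P 1 := hP 1
  rw [hIexp]
  set p := P 0 with hp_def
  set q := P 1 with hq_def
  set R0 : ℝ := p + q * θ with hR0_def
  have hR0' : R0 = θ + p * (1 - θ) := by rw [hR0_def]; linear_combination θ * hsum2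
  have hR0pos : 0 < R0 := by
    rw [hR0']
    exact add_pos_of_pos_of_nonneg hθ0 (mul_nonneg hp0 ht1.le)
  rcases eq_or_lt_of_le hq0 with hq | hq
  · -- q = 0, p = 1
    have hq' : q = 0 := hq.symm
    have hp1 : p = 1 := by linarith
    have hR01 : R0 = 1 := by rw [hR0_def, hq', hp1]; ring
    rw [hq', hp1, hR01]
    simp
    linarith [hCpos]
  · -- q > 0
    set R1 : ℝ := q * (1 - θ) with hR1_def
    have hR1pos : 0 < R1 := by rw [hR1_def]; positivity
    have hRsum : R0 + R1 = 1 := by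
      rw [hR0_def, hR1_def]; linear_combination hsum2
    rw [Real.log_div one_ne_zero (ne_of_gt hR0pos),
        Real.log_div (ne_of_gt hθ0) (ne_of_gt hR0pos),
        Real.log_div (ne_of_gt ht1) (ne_of_gt hR1pos),
        Real.log_one, hC']
    have g0 : R0 * (Real.log (1 - u) - Real.log R0) ≤ (1 - u) - R0 :=
      gibbs R0 (1 - u) hR0pos hQ0pos
    have g1 : R1 * (Real.log u - Real.log R1) ≤ u - R1 :=
      gibbs R1 u hR1pos hu0
    rw [hlog1u] at g0
    rw [hlogu] at g1
    have hentq : q * θ * Real.log θ + q * (1 - θ) * Real.log (1 - θ)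
        = -(q * (1 - θ) * s) := by linear_combination q * hent
    have hx : p * Real.log R0 + q * θ * Real.log R0 = R0 * Real.log R0 := by
      rw [hR0_def]; ring
    have hy : R1 * Real.log (1 - θ) = q * (1 - θ) * Real.log (1 - θ) := by
      rw [hR1_def]
    have hz : q * (1 - θ) * s = R1 * s := by rw [hR1_def]
    have hs1 : R0 * s + R1 * s = s := by linear_combination s * hRsum
    have hL1 : R0 * L + R1 * L = L := by linear_combination L * hRsum
    linarith only [g0, g1, hx, hy, hz, hentq, hRsum, hs1, hL1]
end

section
/- The dimensionality identity for the sets of capacity- and dispersion-achieving input distributions: dim(Π) = nullity(Ĵ) = |X̂| − rank(Ĵ), where Π is the polytope of capacity-achieving input distributions supported on X̂, and Ĵ is the Fisher information matrix restricted to X̂; the key step is that Ĵ P = 1_{X̂} for every P ∈ Π, so ker(Ĵ) contains all differences of elements of Π and conversely every direction in ker(Ĵ) ∩ {h : Σh(x)=0} is a feasible tangent direction of Π. -/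
open Matrix

private lemma ker_marginal_zero {X Y : Type*} [Fintype X] [Fintype Y]
    (W : X → Y → ℝ) (Qstar : Y → ℝ) (hQpos : ∀ y, 0 < Qstar y)
    (Jhat : Matrix X X ℝ)
    (hJ : ∀ x x', Jhat x x' = ∑ y, W x y * W x' y / Qstar y)
    (h : X → ℝ) (hker : Jhat *ᵥ h = 0) :
    ∀ y, ∑ x, h x * W x y = 0 := by
  have expand : ∑ x, h x * (Jhat *ᵥ h) x = ∑ y, (∑ x, h x * W x y)^2 / Qstar y := by
    have step1 : ∑ x, h x * (Jhat *ᵥ h) x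
        = ∑ x, ∑ y, ∑ x', h x * W x y * (h x' * W x' y) / Qstar y := by
      refine Finset.sum_congr rfl fun x _ => ?_
      simp only [mulVec, dotProduct, hJ, Finset.sum_mul, Finset.mul_sum]
      rw [Finset.sum_comm]
      exact Finset.sum_congr rfl fun y _ => Finset.sum_congr rfl fun x' _ => by ring
    rw [step1, Finset.sum_comm]
    refine Finset.sum_congr rfl fun y _ => ?_
    rw [sq, Finset.sum_mul_sum, Finset.sum_div]
    exact Finset.sum_congr rfl fun x _ => by rw [Finset.sum_div]
  have hz : ∑ y, (∑ x, h x * W x y)^2 / Qstar y = 0 := by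
    rw [← expand, hker]; simp
  intro y
  have hnn : ∀ y' ∈ Finset.univ (α := Y), 0 ≤ (∑ x, h x * W x y')^2 / Qstar y' :=
    fun y' _ => div_nonneg (sq_nonneg _) (hQpos y').le
  have h1 := (Finset.sum_eq_zero_iff_of_nonneg hnn).mp hz y (Finset.mem_univ y)
  have h2 := (div_eq_zero_iff.mp h1).resolve_right (hQpos y).ne'
  exact pow_eq_zero_iff (two_ne_zero) |>.mp h2


/-- dimensionality identity `dim(Π) = nullity(Ĵ) = |X̂| − rank(Ĵ)`:
`Ĵ P = 1` for every `P ∈ Π`, the direction space of the polytope `Π` equals `ker(Ĵ)`,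
every `h ∈ ker(Ĵ)` with `Σ_x h(x) = 0` is a feasible tangent direction at a relative
interior point of `Π`, and `nullity(Ĵ) + rank(Ĵ) = |X̂|`. (Here the index type `X`
plays the role of `X̂`.) -/
theorem capacity_polytope_dimension
    {X Y : Type*} [Fintype X] [Fintype Y] [DecidableEq X]
    (W : X → Y → ℝ) (hW0 : ∀ x y, 0 ≤ W x y) (hW1 : ∀ x, ∑ y, W x y = 1)
    (Qstar : Y → ℝ) (hQpos : ∀ y, 0 < Qstar y) (hQ1 : ∑ y, Qstar y = 1)
    (PiSet : Set (X → ℝ))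
    (hPi : PiSet = {P | (∀ x, 0 ≤ P x) ∧ (∑ x, P x = 1) ∧
                        ∀ y, ∑ x, P x * W x y = Qstar y})
    (hint : ∃ P₀ ∈ PiSet, ∀ x, 0 < P₀ x)
    (Jhat : Matrix X X ℝ)
    (hJ : ∀ x x', Jhat x x' = ∑ y, W x y * W x' y / Qstar y) :
    (∀ P ∈ PiSet, Jhat *ᵥ P = fun _ => 1) ∧
    (∀ h : X → ℝ, Jhat *ᵥ h = 0 → (∑ x, h x = 0) →
      ∀ P ∈ PiSet, (∀ x, 0 < P x) → ∃ ε : ℝ, 0 < ε ∧ P + ε • h ∈ PiSet) ∧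
    vectorSpan ℝ PiSet = LinearMap.ker ((Matrix.mulVecLin Jhat)) ∧
    Module.finrank ℝ (LinearMap.ker (Matrix.mulVecLin Jhat)) + Jhat.rank
      = Fintype.card X := by
  -- Part 1
  have part1 : ∀ P ∈ PiSet, Jhat *ᵥ P = fun _ => 1 := by
    intro P hP
    rw [hPi] at hP
    obtain ⟨hP0, hP1, hPQ⟩ := hP
    funext x
    have : (Jhat *ᵥ P) x = ∑ y, (W x y / Qstar y) * ∑ x', P x' * W x' y := by
      simp only [mulVec, dotProduct, hJ, Finset.sum_mul, Finset.mul_sum]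
      rw [Finset.sum_comm]
      exact Finset.sum_congr rfl fun y _ => Finset.sum_congr rfl fun x' _ => by ring
    rw [this]
    have : ∀ y, (W x y / Qstar y) * ∑ x', P x' * W x' y = W x y := fun y => by
      rw [hPQ y, div_mul_cancel₀ _ (hQpos y).ne']
    simp only [this, hW1 x]
  -- Part 2
  have part2 : ∀ h : X → ℝ, Jhat *ᵥ h = 0 → (∑ x, h x = 0) →
      ∀ P ∈ PiSet, (∀ x, 0 < P x) → ∃ ε : ℝ, 0 < ε ∧ P + ε • h ∈ PiSet := by
    intro h hker hsum P hP hPpos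
    have hg := ker_marginal_zero W Qstar hQpos Jhat hJ h hker
    rw [hPi] at hP
    obtain ⟨hP0, hP1, hPQ⟩ := hP
    rcases isEmpty_or_nonempty X with hX | hX
    · simp at hP1
    · set ε := Finset.univ.inf' Finset.univ_nonempty (fun x => P x / (|h x| + 1)) with hε
      have hεpos : 0 < ε := by
        rw [hε, Finset.lt_inf'_iff]
        intro x _
        exact div_pos (hPpos x) (by positivity)
      refine ⟨ε, hεpos, ?_⟩
      rw [hPi]
      refine ⟨fun x => ?_, ?_, fun y => ?_⟩
      · have hle : ε ≤ P x / (|h x| + 1) :=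
          Finset.inf'_le _ (Finset.mem_univ x)
        have h2 : ε * (|h x| + 1) ≤ P x :=
          (le_div_iff₀ (by positivity)).mp hle
        have h3 : -|h x| ≤ h x := neg_abs_le _
        have h4 : (0:ℝ) ≤ |h x| := abs_nonneg _
        simp only [Pi.add_apply, Pi.smul_apply, smul_eq_mul]
        nlinarith
      · simp only [Pi.add_apply, Pi.smul_apply, smul_eq_mul]
        rw [Finset.sum_add_distrib, ← Finset.mul_sum, hP1, hsum, mul_zero, add_zero]
      · simp only [Pi.add_apply, Pi.smul_apply, smul_eq_mul, add_mul]
        rw [Finset.sum_add_distrib, hPQ y]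
        have : ∑ x, ε * h x * W x y = ε * ∑ x, h x * W x y := by
          rw [Finset.mul_sum]
          exact Finset.sum_congr rfl fun x _ => by ring
        rw [this, hg y, mul_zero, add_zero]
  refine ⟨part1, part2, ?_, ?_⟩
  -- Part 3
  · apply le_antisymm
    · rw [vectorSpan_def]
      rw [Submodule.span_le]
      rintro v hv
      rw [Set.mem_vsub] at hv
      obtain ⟨P, hP, Q, hQ, rfl⟩ := hv
      have : Jhat.mulVecLin (P -ᵥ Q) = 0 := by
        have : (P : X → ℝ) -ᵥ Q = P - Q := rfl
        rw [this, map_sub]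
        simp only [mulVecLin_apply]
        rw [part1 P hP, part1 Q hQ, sub_self]
      exact LinearMap.mem_ker.mpr this
    · intro h hh
      rw [LinearMap.mem_ker, mulVecLin_apply] at hh
      have hg := ker_marginal_zero W Qstar hQpos Jhat hJ h hh
      have hsum : ∑ x, h x = 0 := by
        have : ∑ x, h x = ∑ x, ∑ y, h x * W x y := by
          refine Finset.sum_congr rfl fun x _ => ?_
          rw [← Finset.mul_sum, hW1 x, mul_one]
        rw [this, Finset.sum_comm]
        simp only [hg, Finset.sum_const_zero]
      obtain ⟨P₀, hP₀, hP₀pos⟩ := hint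
      obtain ⟨ε, hεpos, hmem⟩ := part2 h hh hsum P₀ hP₀ hP₀pos
      have hv : (P₀ + ε • h) -ᵥ P₀ ∈ vectorSpan ℝ PiSet :=
        vsub_mem_vectorSpan ℝ hmem hP₀
      have hεh : (P₀ + ε • h) -ᵥ P₀ = ε • h := by
        simp [vsub_eq_sub]
      rw [hεh] at hv
      have : h = ε⁻¹ • (ε • h) := by
        rw [smul_smul, inv_mul_cancel₀ hεpos.ne', one_smul]
      rw [this]
      exact Submodule.smul_mem _ _ hv
  -- Part 4
  · have hrn := LinearMap.finrank_range_add_finrank_ker (Matrix.mulVecLin Jhat)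
    rw [Module.finrank_fintype_fun_eq_card] at hrn
    rw [Matrix.rank]
    omega
end
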